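/- Tetali's identity for unweighted graphs: let G = (V,E) be a finite connected simple graph with n vertices and m edges. Then for the simple random walk on G, the sum of expected hitting times over all ordered pairs of adjacent vertices satisfies ∑_{(x,y) : {x,y} ∈ E} E^x(τ_y) = 2m(n − 1). -/
import Mathlib


open Finset

variable {V : Type*} [Fintype V] [DecidableEq V]

/-- The weight (generalized degree) of a node: `μ_x = ∑_y c x y`. -/
noncomputable def nodeWeight (c : V → V → ℝ) (x : V) : ℝ := ∑ y, c x y

/-- Transition probabilities of the random walk: `p x y = c x y / μ x`. -/
noncomputable def transProb (c : V → V → ℝ) (x y : V) : ℝ := c x y / nodeWeight c x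

/-- The transition matrix killed at the target node `y` (rows at `y` set to zero), so that
`(killed c y ^ n) x z = P^x(X_0 ≠ y, …, X_{n-1} ≠ y, X_n = z)`. -/
noncomputable def killed (c : V → V → ℝ) (y : V) : Matrix V V ℝ :=
  Matrix.of fun u v => if u = y then 0 else transProb c u v

/-- The survival probability `P^x(τ_y > n)` of the walk started at `x`. -/
noncomputable def survival (c : V → V → ℝ) (x y : V) (n : ℕ) : ℝ :=
  ∑ z ∈ Finset.univ.erase y, (killed c y ^ n) x z

/-- The expected hitting time `E^x(τ_y) = ∑_{n ≥ 0} P^x(τ_y > n)`. -/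
noncomputable def hitExp (c : V → V → ℝ) (x y : V) : ℝ := ∑' n : ℕ, survival c x y n

/-- `U_z^{xy}`: the expected number of times `0 ≤ k < τ_y` with `X_k = z`, for the walk
started at `x`. -/
noncomputable def visitExp (c : V → V → ℝ) (x y z : V) : ℝ :=
  if z = y then 0 else ∑' n : ℕ, (killed c y ^ n) x z

section Generic

variable {c : V → V → ℝ} (hc0 : ∀ u v, 0 ≤ c u v) (hw : ∀ u, 0 < nodeWeight c u) {y : V}

private lemma sum_ite_erase (f : V → ℝ) (y : V) :
    ∑ w, (if w = y then 0 else f w) = ∑ w ∈ Finset.univ.erase y, f w :=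
  ((Finset.sum_erase _ (by simp)).symm).trans
    (Finset.sum_congr rfl fun w hw => by simp [Finset.ne_of_mem_erase hw])

include hc0 hw

private lemma killed_nonneg (u v : V) : 0 ≤ killed c y u v := by
  unfold killed transProb
  simp only [Matrix.of_apply]
  split
  · exact le_refl 0
  · exact div_nonneg (hc0 u v) (hw u).le

private lemma killed_pow_nonneg (n : ℕ) (u v : V) : 0 ≤ (killed c y ^ n) u v := by
  induction n generalizing u v with
  | zero => simp [Matrix.one_apply]; split <;> norm_num
  | succ n ih =>
      rw [pow_succ, Matrix.mul_apply]
      exact Finset.sum_nonneg fun w _ => mul_nonneg (ih u w) (killed_nonneg hc0 hw w v)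

private lemma killed_row_sum (x : V) : ∑ v, killed c y x v = if x = y then 0 else 1 := by
  unfold killed transProb
  simp only [Matrix.of_apply]
  split
  · simp
  · rw [← Finset.sum_div, div_eq_one_iff_eq (hw x).ne']; rfl

private lemma killed_pow_row_sum (n : ℕ) (x : V) :
    ∑ v, (killed c y ^ (n + 1)) x v = survival c x y n := by
  simp only [pow_succ, Matrix.mul_apply]
  rw [Finset.sum_comm]
  simp only [← Finset.mul_sum, killed_row_sum hc0 hw, mul_ite, mul_zero, mul_one]
  rw [survival, ← sum_ite_erase]

private lemma survival_zero (x : V) : survival c x y 0 = if x = y then 0 else 1 := by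
  rw [survival, ← sum_ite_erase]
  simp only [pow_zero, Matrix.one_apply]
  rw [Finset.sum_eq_single x (fun b _ hb => by simp [Ne.symm hb]) (by simp)]
  by_cases h : x = y <;> simp [h]

private lemma survival_succ (x : V) (n : ℕ) :
    survival c x y (n + 1) = ∑ w, killed c y x w * survival c w y n := by
  unfold survival
  rw [pow_succ']
  simp only [Matrix.mul_apply]
  rw [Finset.sum_comm]
  simp [mul_sub, Finset.mul_sum, Finset.sum_sub_distrib]

private lemma survival_add (x : V) (a b : ℕ) :
    survival c x y (a + b) = ∑ w, (killed c y ^ a) x w * survival c w y b := by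
  unfold survival
  rw [pow_add]
  simp only [Matrix.mul_apply]
  rw [Finset.sum_comm]
  simp [mul_sub, Finset.mul_sum, Finset.sum_sub_distrib]

private lemma survival_self (n : ℕ) : survival c y y n = 0 := by
  cases n with
  | zero => simp [survival_zero hc0 hw]
  | succ n =>
      rw [survival_succ hc0 hw]
      apply Finset.sum_eq_zero
      intro w _
      simp [killed]

private lemma survival_nonneg (x : V) (n : ℕ) : 0 ≤ survival c x y n :=
  Finset.sum_nonneg fun z _ => killed_pow_nonneg hc0 hw n x z

private lemma survival_le_one (x : V) (n : ℕ) : survival c x y n ≤ 1 := by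
  induction n generalizing x with
  | zero => rw [survival_zero hc0 hw]; split <;> norm_num
  | succ n ih =>
      rw [survival_succ hc0 hw]
      calc ∑ w, killed c y x w * survival c w y n
          ≤ ∑ w, killed c y x w * 1 := by
            apply Finset.sum_le_sum
            intro w _
            exact mul_le_mul_of_nonneg_left (ih w) (killed_nonneg hc0 hw x w)
        _ = ∑ w, killed c y x w := by simp
        _ ≤ 1 := by rw [killed_row_sum hc0 hw]; split <;> norm_num

private lemma survival_succ_le (x : V) (n : ℕ) :
    survival c x y (n + 1) ≤ survival c x y n := by
  induction n generalizing x with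
  | zero =>
      rw [survival_zero hc0 hw]
      by_cases h : x = y
      · subst h; rw [survival_self hc0 hw]; simp
      · simp only [h, if_false]
        exact survival_le_one hc0 hw x 1
  | succ n ih =>
      rw [survival_succ hc0 hw, survival_succ hc0 hw x n]
      apply Finset.sum_le_sum
      intro w _
      exact mul_le_mul_of_nonneg_left (ih w) (killed_nonneg hc0 hw x w)

private lemma survival_antitone (x : V) : Antitone (survival c x y) :=
  antitone_nat_of_succ_le fun n => survival_succ_le hc0 hw x n

end Generic

section Graph

variable (G : SimpleGraph V) [DecidableRel G.Adj]

private noncomputable def gcond : V → V → ℝ := fun u v => if G.Adj u v then 1 else 0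

private lemma gcond_nonneg (u v : V) : 0 ≤ gcond G u v := by
  unfold gcond; split <;> norm_num

private lemma gcond_symm (u v : V) : gcond G u v = gcond G v u := by
  unfold gcond; simp [SimpleGraph.adj_comm]

private lemma nodeWeight_gcond (x : V) : nodeWeight (gcond G) x = G.degree x := by
  unfold nodeWeight gcond
  rw [Finset.sum_boole]
  congr 1
  rw [← SimpleGraph.neighborFinset_eq_filter]
  rfl

variable (hconn : G.Connected) (hcard : 1 < Fintype.card V)

include hconn hcard

private lemma degree_pos (x : V) : 0 < G.degree x := by
  obtain ⟨z, hz⟩ := Fintype.exists_ne_of_one_lt_card hcard x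
  obtain ⟨w⟩ := hconn.preconnected x z
  rw [G.degree_pos_iff_exists_adj]
  cases w with
  | nil => exact absurd rfl hz.symm
  | cons h p => exact ⟨_, h⟩

private lemma weight_pos (x : V) : 0 < nodeWeight (gcond G) x := by
  rw [nodeWeight_gcond]
  exact_mod_cast degree_pos G hconn hcard x

private lemma survival_lt_one {y : V} :
    ∀ n (x : V), (∃ w : G.Walk x y, w.length ≤ n) → survival (gcond G) x y n < 1 := by
  have hc0 := gcond_nonneg G
  have hw := weight_pos G hconn hcard
  intro n
  induction n with
  | zero =>
      rintro x ⟨w, hl⟩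
      have hx : x = y := w.eq_of_length_eq_zero (Nat.le_zero.mp hl)
      subst hx
      rw [survival_self hc0 hw]; norm_num
  | succ n ih =>
      rintro x ⟨w, hl⟩
      by_cases hxy : x = y
      · subst hxy; rw [survival_self hc0 hw]; norm_num
      · cases w with
        | nil => exact absurd rfl hxy
        | cons h p =>
            rename_i u
            rw [survival_succ hc0 hw]
            have hrow : ∑ v, killed (gcond G) y x v = 1 := by
              rw [killed_row_sum hc0 hw, if_neg hxy]
            calc ∑ v, killed (gcond G) y x v * survival (gcond G) v y n
                < ∑ v, killed (gcond G) y x v := by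
                  apply Finset.sum_lt_sum
                  · intro i _
                    calc killed (gcond G) y x i * survival (gcond G) i y n
                        ≤ killed (gcond G) y x i * 1 :=
                          mul_le_mul_of_nonneg_left (survival_le_one hc0 hw i n)
                            (killed_nonneg hc0 hw x i)
                      _ = killed (gcond G) y x i := mul_one _
                  · refine ⟨u, Finset.mem_univ u, ?_⟩
                    have hK : 0 < killed (gcond G) y x u := by
                      unfold killed transProb gcond
                      simp only [Matrix.of_apply, if_neg hxy, if_pos h]
                      exact div_pos one_pos (hw x)
                    have hs : survival (gcond G) u y n < 1 :=
                      ih u ⟨p, Nat.le_of_succ_le_succ (by simpa using hl)⟩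
                    nlinarith
              _ = 1 := hrow

end Graph

section Summable

variable (G : SimpleGraph V) [DecidableRel G.Adj]
variable (hconn : G.Connected) (hcard : 1 < Fintype.card V)

include hconn hcard

private lemma summable_survival (x y : V) :
    Summable (fun n => survival (gcond G) x y n) := by
  classical
  have hc0 := gcond_nonneg G
  have hw := weight_pos G hconn hcard
  set N := Fintype.card V with hN
  have hN1 : 1 ≤ N := le_of_lt hcard
  have hNpos : 0 < N := lt_of_lt_of_le one_pos hN1
  have hne : (Finset.univ : Finset V).Nonempty := ⟨y, Finset.mem_univ y⟩
  set ρ : ℝ := Finset.univ.sup' hne (fun v => survival (gcond G) v y (N - 1)) with hρ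
  have hρ0 : 0 ≤ ρ := by
    refine le_trans (survival_nonneg hc0 hw (y := y) y (N - 1)) ?_
    exact Finset.le_sup' (fun v => survival (gcond G) v y (N - 1)) (Finset.mem_univ y)
  have hρx : ∀ v, survival (gcond G) v y (N - 1) ≤ ρ :=
    fun v => Finset.le_sup' (fun v => survival (gcond G) v y (N - 1)) (Finset.mem_univ v)
  have hρ1 : ρ < 1 := by
    rw [hρ, Finset.sup'_lt_iff]
    intro v _
    apply survival_lt_one G hconn hcard
    obtain ⟨w⟩ := hconn.preconnected v y
    exact ⟨w.toPath, Nat.le_sub_one_of_lt w.toPath.2.length_lt⟩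
  -- block decay
  have hpow : ∀ k (v : V), survival (gcond G) v y (k * N) ≤ ρ ^ k := by
    intro k
    induction k with
    | zero => intro v; simpa using survival_le_one hc0 hw v 0
    | succ k ih =>
        intro v
        have harith : (k + 1) * N = N + k * N := by ring
        rw [harith, survival_add hc0 hw]
        have hNsub : N - 1 + 1 = N := Nat.succ_pred_eq_of_pos hNpos
        calc ∑ w, (killed (gcond G) y ^ N) v w * survival (gcond G) w y (k * N)
            ≤ ∑ w, (killed (gcond G) y ^ N) v w * ρ ^ k := by
              apply Finset.sum_le_sum
              intro w _
              exact mul_le_mul_of_nonneg_left (ih w) (killed_pow_nonneg hc0 hw N v w)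
          _ = (∑ w, (killed (gcond G) y ^ N) v w) * ρ ^ k := by rw [Finset.sum_mul]
          _ = survival (gcond G) v y (N - 1) * ρ ^ k := by
              conv_lhs => rw [← hNsub]
              rw [killed_pow_row_sum hc0 hw]
          _ ≤ ρ * ρ ^ k := by
              exact mul_le_mul_of_nonneg_right (hρx v) (pow_nonneg hρ0 k)
          _ = ρ ^ (k + 1) := (pow_succ' ρ k).symm
  have hbound : ∀ n, survival (gcond G) x y n ≤ ρ ^ (n / N) := by
    intro n
    calc survival (gcond G) x y n
        ≤ survival (gcond G) x y (n / N * N) :=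
          survival_antitone hc0 hw x (Nat.div_mul_le_self n N)
      _ ≤ ρ ^ (n / N) := hpow (n / N) x
  -- block sum identity
  have hblock : ∀ M : ℕ, ∑ n ∈ Finset.range (N * M), ρ ^ (n / N)
      = N * ∑ k ∈ Finset.range M, ρ ^ k := by
    intro M
    induction M with
    | zero => simp
    | succ M ih =>
        have h1 : N * M ≤ N * (M + 1) := Nat.mul_le_mul_left N (Nat.le_succ M)
        rw [← Finset.sum_range_add_sum_Ico (fun n => ρ ^ (n / N)) h1, ih]
        have h2 : ∑ n ∈ Finset.Ico (N * M) (N * (M + 1)), ρ ^ (n / N) = N * ρ ^ M := by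
          rw [Finset.sum_Ico_eq_sum_range]
          have h3 : N * (M + 1) - N * M = N := by ring_nf; omega
          rw [h3]
          have h4 : ∀ i ∈ Finset.range N, ρ ^ ((N * M + i) / N) = ρ ^ M := by
            intro i hi
            rw [Nat.mul_add_div hNpos, Nat.div_eq_of_lt (Finset.mem_range.mp hi)]
            simp
          rw [Finset.sum_congr rfl h4, Finset.sum_const, Finset.card_range, nsmul_eq_mul]
        rw [h2, Finset.sum_range_succ]
        ring
  have hgeom : ∀ M : ℕ, ∑ k ∈ Finset.range M, ρ ^ k ≤ (1 - ρ)⁻¹ := by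
    intro M
    have h1 : 0 < 1 - ρ := by linarith
    have key := geom_sum_mul ρ M
    have hp : 0 ≤ ρ ^ M := pow_nonneg hρ0 M
    rw [inv_eq_one_div, le_div_iff₀ h1]
    have heq : (∑ k ∈ Finset.range M, ρ ^ k) * (1 - ρ) = 1 - ρ ^ M := by
      linear_combination -key
    linarith
  apply summable_of_sum_range_le (c := N * (1 - ρ)⁻¹)
    (fun n => survival_nonneg hc0 hw x n)
  intro M
  calc ∑ n ∈ Finset.range M, survival (gcond G) x y n
      ≤ ∑ n ∈ Finset.range M, ρ ^ (n / N) :=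
        Finset.sum_le_sum fun n _ => hbound n
    _ ≤ ∑ n ∈ Finset.range (N * M), ρ ^ (n / N) := by
        apply Finset.sum_le_sum_of_subset_of_nonneg
        · exact Finset.range_subset_range.mpr (Nat.le_mul_of_pos_left M hNpos)
        · intro i _ _
          exact pow_nonneg hρ0 _
    _ = N * ∑ k ∈ Finset.range M, ρ ^ k := hblock M
    _ ≤ N * (1 - ρ)⁻¹ := by
        apply mul_le_mul_of_nonneg_left (hgeom M)
        positivity

end Summable

section HitExp

variable {c : V → V → ℝ} (hc0 : ∀ u v, 0 ≤ c u v) (hw : ∀ u, 0 < nodeWeight c u) {y : V}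

include hc0 hw

private lemma hitExp_self : hitExp c y y = 0 := by
  rw [hitExp]
  rw [tsum_congr (fun n => survival_self hc0 hw n)]
  exact tsum_zero

private lemma hitExp_rec (hsum : ∀ w, Summable (fun n => survival c w y n)) (x : V) :
    hitExp c x y = (if x = y then 0 else 1) + ∑ w, killed c y x w * hitExp c w y := by
  rw [hitExp, Summable.tsum_eq_zero_add (hsum x), survival_zero hc0 hw]
  congr 1
  calc ∑' n, survival c x y (n + 1)
      = ∑' n, ∑ w, killed c y x w * survival c w y n :=
        tsum_congr fun n => survival_succ hc0 hw x n
    _ = ∑ w, ∑' n, killed c y x w * survival c w y n :=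
        Summable.tsum_finsetSum fun w _ => (hsum w).mul_left _
    _ = ∑ w, killed c y x w * hitExp c w y :=
        Finset.sum_congr rfl fun w _ => tsum_mul_left

end HitExp

section Balance

variable (G : SimpleGraph V) [DecidableRel G.Adj]
variable (hconn : G.Connected) (hcard : 1 < Fintype.card V)

include hconn hcard

private lemma balance (y : V) :
    ∑ w, gcond G y w * hitExp (gcond G) w y
      = 2 * (G.edgeFinset.card : ℝ) - (G.degree y : ℝ) := by
  classical
  have hc0 := gcond_nonneg G
  have hw := weight_pos G hconn hcard
  have hsum : ∀ w, Summable (fun n => survival (gcond G) w y n) :=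
    fun w => summable_survival G hconn hcard w y
  set c := gcond G with hc
  set f : V → ℝ := fun w => hitExp c w y with hf
  set D : V → ℝ := fun x => (G.degree x : ℝ) with hD
  have hDpos : ∀ x, (0 : ℝ) < D x := by
    intro x
    show (0 : ℝ) < (G.degree x : ℝ)
    exact_mod_cast degree_pos G hconn hcard x
  have hDK : ∀ x w, D x * killed c y x w = if x = y then 0 else c x w := by
    intro x w
    show D x * (if x = y then 0 else transProb c x w) = _
    split
    · exact mul_zero _
    · rw [transProb, hc, nodeWeight_gcond]
      exact mul_div_cancel₀ _ (hDpos x).ne'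
  have hcol : ∀ w, ∑ x, c x w = D w := by
    intro w
    rw [Finset.sum_congr rfl (fun x _ => gcond_symm G x w)]
    rw [show ∑ x, c w x = nodeWeight c w from rfl, hc, nodeWeight_gcond]
  have hrec : ∀ x, f x = (if x = y then 0 else 1) + ∑ w, killed c y x w * f w :=
    fun x => hitExp_rec hc0 hw hsum x
  have step1 : ∑ x, D x * f x
      = ∑ x, (if x = y then 0 else D x) + ∑ x, ∑ w, (if x = y then 0 else c x w) * f w := by
    rw [← Finset.sum_add_distrib]
    apply Finset.sum_congr rfl
    intro x _
    rw [hrec x, mul_add, Finset.mul_sum]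
    congr 1
    · split <;> simp
    · apply Finset.sum_congr rfl
      intro w _
      rw [← mul_assoc, hDK]
  have step2 : ∑ x, (if x = y then 0 else D x) = (∑ x, D x) - D y := by
    rw [sum_ite_erase, Finset.sum_erase_eq_sub (Finset.mem_univ y)]
  have step3 : ∑ x, ∑ w, (if x = y then 0 else c x w) * f w
      = ∑ w, (D w - c y w) * f w := by
    rw [Finset.sum_comm]
    apply Finset.sum_congr rfl
    intro w _
    rw [← Finset.sum_mul]
    congr 1
    rw [show ∑ x, (if x = y then 0 else c x w) = ∑ x ∈ Finset.univ.erase y, c x w from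
      sum_ite_erase _ y]
    rw [Finset.sum_erase_eq_sub (Finset.mem_univ y), hcol]
  have step4 : ∑ w, (D w - c y w) * f w = ∑ x, D x * f x - ∑ w, c y w * f w := by
    rw [← Finset.sum_sub_distrib]
    apply Finset.sum_congr rfl
    intro w _
    ring
  have hDsum : ∑ x, D x = 2 * (G.edgeFinset.card : ℝ) := by
    have hnat := G.sum_degrees_eq_twice_card_edges
    show ∑ x, (G.degree x : ℝ) = 2 * (G.edgeFinset.card : ℝ)
    rw [← Nat.cast_sum, hnat]
    push_cast
    ring
  have := step1
  rw [step2, step3, step4, hDsum] at this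
  have hgoal : ∑ w, c y w * f w = 2 * (G.edgeFinset.card : ℝ) - D y := by linarith
  exact hgoal

end Balance


/-- **Tetali's identity for unweighted graphs.** Let `G = (V,E)` be a finite
connected simple graph with `n` vertices and `m` edges. For the simple random walk on `G`
(which is the walk with conductances `c u v = 1` on edges and `0` otherwise, so that
`p x y = 1/deg x` for neighbors), the sum of expected hitting times over all ordered pairs
of adjacent vertices satisfies `∑_{(x,y) : {x,y} ∈ E} E^x(τ_y) = 2m(n − 1)`. -/
theorem tetali_identity_unweighted
    (G : SimpleGraph V) [DecidableRel G.Adj] (hconn : G.Connected) :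
    ∑ p ∈ Finset.univ.filter (fun p : V × V => G.Adj p.1 p.2),
        hitExp (fun u v => if G.Adj u v then (1 : ℝ) else 0) p.1 p.2
      = 2 * (G.edgeFinset.card : ℝ) * ((Fintype.card V : ℝ) - 1) := by
  classical
  by_cases hcard : 1 < Fintype.card V
  · have hcg : (fun u v => if G.Adj u v then (1 : ℝ) else 0) = gcond G := rfl
    rw [hcg, Finset.sum_filter, Fintype.sum_prod_type_right]
    have hinner : ∀ y : V, ∑ x, (if G.Adj x y then hitExp (gcond G) x y else 0)
        = 2 * (G.edgeFinset.card : ℝ) - (G.degree y : ℝ) := by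
      intro y
      rw [← balance G hconn hcard y]
      apply Finset.sum_congr rfl
      intro x _
      rw [gcond_symm G y x]
      show (if G.Adj x y then hitExp (gcond G) x y else 0)
        = (if G.Adj x y then (1:ℝ) else 0) * hitExp (gcond G) x y
      split <;> simp
    rw [Finset.sum_congr rfl (fun y _ => hinner y), Finset.sum_sub_distrib,
      Finset.sum_const, Finset.card_univ]
    have hDsum : ∑ x : V, (G.degree x : ℝ) = 2 * (G.edgeFinset.card : ℝ) := by
      rw [← Nat.cast_sum, G.sum_degrees_eq_twice_card_edges]
      push_cast
      ring
    rw [hDsum, nsmul_eq_mul]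
    ring
  · have h1 : Fintype.card V = 1 := by
      have : 0 < Fintype.card V := Fintype.card_pos_iff.mpr hconn.nonempty
      omega
    have hsub : ∀ p : V × V, ¬ G.Adj p.1 p.2 := by
      intro p h
      exact h.ne (Fintype.card_le_one_iff.mp (le_of_eq h1) p.1 p.2)
    rw [Finset.filter_false_of_mem (fun p _ => hsub p), Finset.sum_empty, h1]
    norm_num
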